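/- Let d ≥ 1, σ ≥ 0, λ₀ > 0, δ ∈ (0,1), θ₀ > 2λ₀ and C_G > 0, and set λ(t) = λ₀(1+(1+t)^{−δ}). Let G^r : (ℤ^d∖{0}) × [0,∞) → ℂ be measurable with |G^r_k(τ)| ≤ C_G ⟨k⟩^{−1} e^{−θ₀⟨|k|τ⟩} for all k ≠ 0 and τ ≥ 0. Let S : (ℤ^d∖{0}) × [0,∞) → ℂ be measurable and define (G⋆S)_k(t) = S_k(t) + ∫₀^t G^r_k(t−s) S_k(s) ds. Then for every θ₁ > 0 with 2θ₁ < θ₀ − 2λ₀ there is a constant C > 0, depending only on C_G, σ, θ₀, λ₀ and θ₁, such that for all t ≥ 0: F[G⋆S](t,λ(t)) ≤ F[S](t,λ(t)) + C ∫₀^t e^{−2θ₁(t−s)} F[S](s,λ(s)) ds. -/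

import Mathlib

open MeasureTheory
open scoped ENNReal

noncomputable section

/-- `ℝ^d` with the Euclidean norm. -/
abbrev Ed (d : ℕ) := EuclideanSpace ℝ (Fin d)

/-- Embedding of `ℤ^d` into `ℝ^d`. -/
def toE {d : ℕ} (k : Fin d → ℤ) : Ed d := WithLp.toLp 2 (fun i => (k i : ℝ))

/-- Japanese bracket of a scalar: `⟨u⟩ = (1+u²)^{1/2}`. -/
def jap (u : ℝ) : ℝ := Real.sqrt (1 + u ^ 2)

/-- Japanese bracket of a vector: `⟨η⟩ = (1+|η|²)^{1/2}`. -/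
def japV {d : ℕ} (η : Ed d) : ℝ := Real.sqrt (1 + ‖η‖ ^ 2)

/-- Joint bracket `⟨k,η⟩ = (1+|k|²+|η|²)^{1/2}`. -/
def japKV {d : ℕ} (k : Fin d → ℤ) (η : Ed d) : ℝ := Real.sqrt (1 + ‖toE k‖ ^ 2 + ‖η‖ ^ 2)

/-- The analytic weight `A_{k,η}(z) = e^{z⟨k,η⟩} ⟨η⟩^σ`. -/
def wA (d : ℕ) (σ z : ℝ) (k : Fin d → ℤ) (η : Ed d) : ℝ :=
  Real.exp (z * japKV k η) * japV η ^ σ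

/-- The time-dependent analyticity radius `λ(t) = λ₀(1+(1+t)^{-δ})`. -/
def lam (lam0 δ t : ℝ) : ℝ := lam0 * (1 + (1 + t) ^ (-δ))

/-- The weighted norm `F[S](t,z) = Σ_{k≠0} A_{k,kt}(z) |S_k(t)|`, valued in `ℝ≥0∞`. -/
def Fnorm (d : ℕ) (σ : ℝ) (S : (Fin d → ℤ) → ℝ → ℂ) (t z : ℝ) : ℝ≥0∞ :=
  ∑' k : {k : Fin d → ℤ // k ≠ 0}, ENNReal.ofReal (wA d σ z k.1 (t • toE k.1) * ‖S k.1 t‖)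

-- aux lemmas
lemma jap_nonneg (u : ℝ) : 0 ≤ jap u := Real.sqrt_nonneg _

lemma one_le_jap (u : ℝ) : 1 ≤ jap u := by
  have := Real.sqrt_le_sqrt (show (1:ℝ) ≤ 1 + u ^ 2 by nlinarith [sq_nonneg u])
  simpa [jap] using this

lemma le_jap {u : ℝ} (hu : 0 ≤ u) : u ≤ jap u := by
  rw [jap]
  calc u = Real.sqrt (u ^ 2) := (Real.sqrt_sq hu).symm
    _ ≤ _ := Real.sqrt_le_sqrt (by linarith)

lemma one_le_japV {d : ℕ} (η : Ed d) : 1 ≤ japV η := by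
  have := Real.sqrt_le_sqrt (show (1:ℝ) ≤ 1 + ‖η‖ ^ 2 by nlinarith [sq_nonneg ‖η‖])
  simpa [japV] using this

lemma japV_nonneg {d : ℕ} (η : Ed d) : 0 ≤ japV η := Real.sqrt_nonneg _

lemma japKV_nonneg {d : ℕ} (k : Fin d → ℤ) (η : Ed d) : 0 ≤ japKV k η := Real.sqrt_nonneg _

lemma wA_nonneg (d : ℕ) (σ z : ℝ) (k : Fin d → ℤ) (η : Ed d) : 0 ≤ wA d σ z k η :=
  mul_nonneg (Real.exp_pos _).le (Real.rpow_nonneg (japV_nonneg η) σ)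

lemma jap_add_le (a b : ℝ) : jap (a + b) ≤ Real.sqrt 2 * jap a * jap b := by
  rw [jap, jap, jap, mul_assoc, ← Real.sqrt_mul (by positivity : (0:ℝ) ≤ 1 + a ^ 2),
    ← Real.sqrt_mul (by norm_num : (0:ℝ) ≤ 2)]
  apply Real.sqrt_le_sqrt
  nlinarith [sq_nonneg (a - b), sq_nonneg (a * b)]

lemma sqrt_sub_le {c a b : ℝ} (hc : 0 ≤ c) (ha : 0 ≤ a) (hab : a ≤ b) :
    Real.sqrt (c + b ^ 2) ≤ Real.sqrt (c + a ^ 2) + (b - a) := by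
  have h1 : a ≤ Real.sqrt (c + a ^ 2) := by
    calc a = Real.sqrt (a ^ 2) := (Real.sqrt_sq ha).symm
      _ ≤ _ := Real.sqrt_le_sqrt (by linarith)
  have h3 : Real.sqrt (c + a ^ 2) ^ 2 = c + a ^ 2 := Real.sq_sqrt (by positivity)
  have h4 : c + b ^ 2 ≤ (Real.sqrt (c + a ^ 2) + (b - a)) ^ 2 := by
    nlinarith [mul_nonneg (sub_nonneg.mpr hab) (sub_nonneg.mpr h1)]
  calc Real.sqrt (c + b ^ 2) ≤ Real.sqrt ((Real.sqrt (c + a ^ 2) + (b - a)) ^ 2) :=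
        Real.sqrt_le_sqrt h4
    _ = _ := Real.sqrt_sq (by linarith)

lemma one_le_norm_toE {d : ℕ} {k : Fin d → ℤ} (hk : k ≠ 0) : 1 ≤ ‖toE k‖ := by
  obtain ⟨i, hi⟩ : ∃ i, k i ≠ 0 := by
    by_contra h; push_neg at h; exact hk (funext h)
  have h1 : (1:ℝ) ≤ |(k i : ℝ)| := by exact_mod_cast Int.one_le_abs hi
  have h2 : |(k i : ℝ)| ≤ ‖toE k‖ := by
    rw [EuclideanSpace.norm_eq]
    rw [show |(k i : ℝ)| = Real.sqrt (‖toE k i‖ ^ 2) by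
      rw [Real.norm_eq_abs, Real.sqrt_sq (abs_nonneg _)]; simp [toE]]
    exact Real.sqrt_le_sqrt (Finset.single_le_sum (f := fun j => ‖toE k j‖ ^ 2) (fun j _ => sq_nonneg _) (Finset.mem_univ i))
  linarith

lemma lam_pos {lam0 δ : ℝ} (hl : 0 < lam0) {t : ℝ} (ht : 0 ≤ t) : 0 < lam lam0 δ t := by
  unfold lam
  have : 0 < (1 + t) ^ (-δ) := Real.rpow_pos_of_pos (by linarith) _
  nlinarith

lemma lam_le {lam0 δ : ℝ} (hl : 0 < lam0) (hδ0 : 0 < δ) {t : ℝ} (ht : 0 ≤ t) :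
    lam lam0 δ t ≤ 2 * lam0 := by
  unfold lam
  have : (1 + t) ^ (-δ) ≤ 1 :=
    Real.rpow_le_one_of_one_le_of_nonpos (by linarith) (by linarith)
  nlinarith

lemma lam_anti {lam0 δ : ℝ} (hl : 0 < lam0) (hδ0 : 0 < δ) {s t : ℝ} (hs : 0 ≤ s) (hst : s ≤ t) :
    lam lam0 δ t ≤ lam lam0 δ s := by
  unfold lam
  have := Real.rpow_le_rpow_of_nonpos (show (0:ℝ) < 1 + s by linarith)
    (by linarith : 1 + s ≤ 1 + t) (by linarith : -δ ≤ 0)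
  nlinarith

set_option maxHeartbeats 1000000 in
lemma key_est {d : ℕ} (σ lam0 δ θ₀ C_G θ₁ : ℝ)
    (hσ : 0 ≤ σ) (hl : 0 < lam0) (hδ0 : 0 < δ)
    (hCG : 0 < C_G) (hθ₁ : 0 < θ₁) (hθθ : 2 * θ₁ < θ₀ - 2 * lam0)
    (n : ℕ) (hn : σ ≤ n)
    (k : Fin d → ℤ) (hk : k ≠ 0) {s t : ℝ} (hs : 0 ≤ s) (hst : s ≤ t) :
    wA d σ (lam lam0 δ t) k (t • toE k) *
        (C_G * (japV (toE k))⁻¹ * Real.exp (-θ₀ * jap (‖toE k‖ * (t - s))))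
      ≤ C_G * Real.sqrt 2 ^ σ * (2 / (θ₀ - 2 * lam0 - 2 * θ₁)) ^ n * (Nat.factorial n : ℝ) *
          Real.exp (-2 * θ₁ * (t - s)) * wA d σ (lam lam0 δ s) k (s • toE k) := by
  set ε : ℝ := θ₀ - 2 * lam0 - 2 * θ₁ with hεdef
  have hε : 0 < ε := by rw [hεdef]; linarith
  set K : ℝ := ‖toE k‖ with hKdef
  have hK : 1 ≤ K := one_le_norm_toE hk
  have hK0 : 0 ≤ K := by linarith
  have hτ : 0 ≤ t - s := by linarith
  have ht0 : 0 ≤ t := le_trans hs hst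
  set u : ℝ := K * (t - s) with hudef
  have hu : 0 ≤ u := mul_nonneg hK0 hτ
  set ju : ℝ := jap u with hjudef
  have hju1 : 1 ≤ ju := one_le_jap u
  have hju0 : 0 ≤ ju := by linarith
  have huju : u ≤ ju := le_jap hu
  have hτu : t - s ≤ u := by nlinarith
  have hτju : t - s ≤ ju := le_trans hτu huju
  -- norms of scaled vectors
  have hnt : ‖t • toE k‖ = t * K := by
    rw [norm_smul, Real.norm_eq_abs, abs_of_nonneg ht0, hKdef]
  have hns : ‖s • toE k‖ = s * K := by
    rw [norm_smul, Real.norm_eq_abs, abs_of_nonneg hs, hKdef]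
  -- bracket comparison
  have hAB : japKV k (t • toE k) ≤ japKV k (s • toE k) + u := by
    rw [japKV, japKV, hnt, hns, ← hKdef]
    have h := sqrt_sub_le (c := 1 + K ^ 2) (a := s * K) (b := t * K)
      (by positivity) (mul_nonneg hs hK0) (by nlinarith)
    have e1 : 1 + K ^ 2 + (t * K) ^ 2 = (1 + K ^ 2) + (t * K) ^ 2 := by ring
    have e2 : 1 + K ^ 2 + (s * K) ^ 2 = (1 + K ^ 2) + (s * K) ^ 2 := by ring
    rw [e1, e2]
    calc Real.sqrt ((1 + K ^ 2) + (t * K) ^ 2)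
        ≤ Real.sqrt ((1 + K ^ 2) + (s * K) ^ 2) + (t * K - s * K) := h
      _ = Real.sqrt ((1 + K ^ 2) + (s * K) ^ 2) + u := by rw [hudef]; ring_nf
  -- japV values as jap
  have hVt : japV (t • toE k) = jap (t * K) := by rw [japV, jap, hnt]
  have hVs : japV (s • toE k) = jap (s * K) := by rw [japV, jap, hns]
  -- lam facts
  have hL1 : lam lam0 δ t ≤ lam lam0 δ s := lam_anti hl hδ0 hs hst
  have hL2 : lam lam0 δ t ≤ 2 * lam0 := lam_le hl hδ0 ht0
  have hL0 : 0 < lam lam0 δ t := lam_pos hl ht0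
  have hLs0 : 0 < lam lam0 δ s := lam_pos hl hs
  have hB0 : 0 ≤ japKV k (s • toE k) := japKV_nonneg _ _
  -- exponential estimate
  have hexp : Real.exp (lam lam0 δ t * japKV k (t • toE k)) ≤
      Real.exp (lam lam0 δ s * japKV k (s • toE k)) * Real.exp (2 * lam0 * ju) := by
    rw [← Real.exp_add]
    apply Real.exp_le_exp.mpr
    have h1 : lam lam0 δ t * japKV k (t • toE k) ≤
        lam lam0 δ t * (japKV k (s • toE k) + u) :=
      mul_le_mul_of_nonneg_left hAB hL0.le
    have h2 : lam lam0 δ t * japKV k (s • toE k) ≤ lam lam0 δ s * japKV k (s • toE k) :=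
      mul_le_mul_of_nonneg_right hL1 hB0
    have h3 : lam lam0 δ t * u ≤ 2 * lam0 * u := mul_le_mul_of_nonneg_right hL2 hu
    have h4 : 2 * lam0 * u ≤ 2 * lam0 * ju := mul_le_mul_of_nonneg_left huju (by positivity)
    nlinarith
  -- power estimate
  have hpow : japV (t • toE k) ^ σ ≤ Real.sqrt 2 ^ σ * (japV (s • toE k) ^ σ * ju ^ σ) := by
    rw [hVt, hVs]
    have hsplit : t * K = s * K + u := by rw [hudef]; ring
    have h2 : jap (t * K) ≤ Real.sqrt 2 * jap (s * K) * ju := by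
      rw [hsplit]; exact jap_add_le _ _
    calc jap (t * K) ^ σ ≤ (Real.sqrt 2 * jap (s * K) * ju) ^ σ :=
          Real.rpow_le_rpow (jap_nonneg _) h2 hσ
      _ = Real.sqrt 2 ^ σ * (jap (s * K) ^ σ * ju ^ σ) := by
          rw [Real.mul_rpow (mul_nonneg (Real.sqrt_nonneg 2) (jap_nonneg _)) hju0,
            Real.mul_rpow (Real.sqrt_nonneg 2) (jap_nonneg _)]
          ring
  -- ju^σ bound
  have hjuσ : ju ^ σ ≤ (2 / ε) ^ n * (Nat.factorial n : ℝ) * Real.exp (ε * ju / 2) := by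
    have h1 : ju ^ σ ≤ ju ^ (n:ℝ) :=
      Real.rpow_le_rpow_of_exponent_le hju1 hn
    rw [Real.rpow_natCast] at h1
    have h2 : (ε * ju / 2) ^ n / (Nat.factorial n : ℝ) ≤ Real.exp (ε * ju / 2) :=
      Real.pow_div_factorial_le_exp _ (div_nonneg (mul_nonneg hε.le hju0) (by norm_num)) n
    have hfact : (0:ℝ) < (Nat.factorial n : ℝ) := by exact_mod_cast Nat.factorial_pos n
    have h3 : (ju : ℝ) ^ n = (2 / ε) ^ n * (ε * ju / 2) ^ n := by
      rw [← mul_pow]; congr 1; field_simp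
    calc ju ^ σ ≤ (ju : ℝ) ^ n := h1
      _ = (2 / ε) ^ n * (ε * ju / 2) ^ n := h3
      _ ≤ (2 / ε) ^ n * ((Nat.factorial n : ℝ) * Real.exp (ε * ju / 2)) := by
          apply mul_le_mul_of_nonneg_left _ (le_of_lt (pow_pos (div_pos two_pos hε) n))
          rw [div_le_iff₀ hfact] at h2; linarith [h2]
      _ = (2 / ε) ^ n * (Nat.factorial n : ℝ) * Real.exp (ε * ju / 2) := by ring
  -- core scalar bound
  have hcore : ju ^ σ * (Real.exp (2 * lam0 * ju) * Real.exp (-θ₀ * ju)) ≤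
      (2 / ε) ^ n * (Nat.factorial n : ℝ) * Real.exp (-2 * θ₁ * (t - s)) := by
    have hery : 0 ≤ Real.exp (2 * lam0 * ju) * Real.exp (-θ₀ * ju) := by positivity
    calc ju ^ σ * (Real.exp (2 * lam0 * ju) * Real.exp (-θ₀ * ju))
        ≤ ((2 / ε) ^ n * (Nat.factorial n : ℝ) * Real.exp (ε * ju / 2)) *
            (Real.exp (2 * lam0 * ju) * Real.exp (-θ₀ * ju)) :=
          mul_le_mul_of_nonneg_right hjuσ hery
      _ = (2 / ε) ^ n * (Nat.factorial n : ℝ) * Real.exp (ε * ju / 2 + (2 * lam0 * ju + -θ₀ * ju)) := by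
          rw [Real.exp_add, Real.exp_add]; ring
      _ ≤ (2 / ε) ^ n * (Nat.factorial n : ℝ) * Real.exp (-2 * θ₁ * (t - s)) := by
          apply mul_le_mul_of_nonneg_left _
            (mul_nonneg (le_of_lt (pow_pos (div_pos two_pos hε) n))
              (by exact_mod_cast (Nat.factorial_pos n).le))
          apply Real.exp_le_exp.mpr
          have : ε * ju / 2 + (2 * lam0 * ju + -θ₀ * ju) = -(ε / 2) * ju + -2 * θ₁ * ju := by
            rw [hεdef]; ring
          rw [this]
          nlinarith [mul_le_mul_of_nonneg_left hτju (by positivity : (0:ℝ) ≤ 2 * θ₁),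
            mul_nonneg (by positivity : (0:ℝ) ≤ ε / 2) hju0]
  -- assemble
  have hI0 : 0 ≤ (japV (toE k))⁻¹ := inv_nonneg.mpr (japV_nonneg _)
  have hI1 : (japV (toE k))⁻¹ ≤ 1 := by
    exact inv_le_one_of_one_le₀ (one_le_japV _)
  rw [wA, wA]
  calc Real.exp (lam lam0 δ t * japKV k (t • toE k)) * japV (t • toE k) ^ σ *
        (C_G * (japV (toE k))⁻¹ * Real.exp (-θ₀ * ju))
      ≤ (Real.exp (lam lam0 δ s * japKV k (s • toE k)) * Real.exp (2 * lam0 * ju)) *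
          (Real.sqrt 2 ^ σ * (japV (s • toE k) ^ σ * ju ^ σ)) *
          (C_G * 1 * Real.exp (-θ₀ * ju)) := by
        have hVtσ : 0 ≤ japV (t • toE k) ^ σ := Real.rpow_nonneg (japV_nonneg _) σ
        have hVsσ : 0 ≤ japV (s • toE k) ^ σ := Real.rpow_nonneg (japV_nonneg _) σ
        have hjuσ0 : 0 ≤ ju ^ σ := Real.rpow_nonneg hju0 σ
        have hsq : 0 ≤ Real.sqrt 2 ^ σ := Real.rpow_nonneg (Real.sqrt_nonneg 2) σ
        apply mul_le_mul
        · exact mul_le_mul hexp hpow hVtσ (by positivity)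
        · exact mul_le_mul_of_nonneg_right (mul_le_mul_of_nonneg_left hI1 hCG.le)
            (Real.exp_pos _).le
        · exact mul_nonneg (mul_nonneg hCG.le hI0) (Real.exp_pos _).le
        · exact mul_nonneg (mul_nonneg (Real.exp_pos _).le (Real.exp_pos _).le)
            (mul_nonneg hsq (mul_nonneg hVsσ hjuσ0))
    _ = (C_G * Real.sqrt 2 ^ σ) *
          (Real.exp (lam lam0 δ s * japKV k (s • toE k)) * japV (s • toE k) ^ σ) *
          (ju ^ σ * (Real.exp (2 * lam0 * ju) * Real.exp (-θ₀ * ju))) := by ring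
    _ ≤ (C_G * Real.sqrt 2 ^ σ) *
          (Real.exp (lam lam0 δ s * japKV k (s • toE k)) * japV (s • toE k) ^ σ) *
          ((2 / ε) ^ n * (Nat.factorial n : ℝ) * Real.exp (-2 * θ₁ * (t - s))) := by
        apply mul_le_mul_of_nonneg_left hcore
        exact mul_nonneg (mul_nonneg hCG.le (Real.rpow_nonneg (Real.sqrt_nonneg 2) σ))
          (mul_nonneg (Real.exp_pos _).le (Real.rpow_nonneg (japV_nonneg _) σ))
    _ = C_G * Real.sqrt 2 ^ σ * (2 / ε) ^ n * (Nat.factorial n : ℝ) * Real.exp (-2 * θ₁ * (t - s)) *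
          (Real.exp (lam lam0 δ s * japKV k (s • toE k)) * japV (s • toE k) ^ σ) := by ring

lemma contOn_wA {d : ℕ} (σ lam0 δ : ℝ) (k : Fin d → ℤ) (t : ℝ) :
    ContinuousOn (fun s : ℝ => wA d σ (lam lam0 δ s) k (s • toE k)) (Set.Ioc 0 t) := by
  have hsm : Continuous (fun s : ℝ => s • toE k) := continuous_id.smul continuous_const
  have hkv : Continuous fun s : ℝ => japKV k (s • toE k) := by
    unfold japKV
    exact Real.continuous_sqrt.comp (continuous_const.add (hsm.norm.pow 2))
  have hV : Continuous fun s : ℝ => japV (s • toE k) := by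
    unfold japV
    exact Real.continuous_sqrt.comp (continuous_const.add (hsm.norm.pow 2))
  have hVσ : Continuous fun s : ℝ => japV (s • toE k) ^ σ := by
    apply hV.rpow_const
    intro x
    exact Or.inl (by have := one_le_japV ((x : ℝ) • toE k); intro h; rw [h] at this; linarith)
  have hlam : ContinuousOn (fun s : ℝ => lam lam0 δ s) (Set.Ioc 0 t) := by
    unfold lam
    apply continuousOn_const.mul
    apply continuousOn_const.add
    apply ContinuousOn.rpow_const ((continuous_const.add continuous_id).continuousOn)
    intro x hx
    exact Or.inl (by have := hx.1; intro h; simp only [Pi.add_apply, id] at h; linarith)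
  unfold wA
  exact (Real.continuous_exp.comp_continuousOn (hlam.mul hkv.continuousOn)).mul
    hVσ.continuousOn

lemma aem_term {d : ℕ} (σ lam0 δ Cv θ₁ : ℝ) (k : Fin d → ℤ)
    (S : (Fin d → ℤ) → ℝ → ℂ) (hS : Measurable (S k)) (t : ℝ) :
    AEMeasurable
      (fun s : ℝ => ENNReal.ofReal
        (Cv * Real.exp (-2 * θ₁ * (t - s)) * (wA d σ (lam lam0 δ s) k (s • toE k) * ‖S k s‖)))
      (volume.restrict (Set.Ioc (0:ℝ) t)) := by
  apply ENNReal.measurable_ofReal.comp_aemeasurable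
  apply AEMeasurable.mul
  · exact ((Real.continuous_exp.comp (by continuity)).aemeasurable).const_mul Cv
  · exact ((contOn_wA σ lam0 δ k t).aemeasurable measurableSet_Ioc).mul
      (hS.norm.aemeasurable)

lemma perk_bound {d : ℕ} (σ lam0 δ θ₀ C_G θ₁ : ℝ)
    (hσ : 0 ≤ σ) (hl : 0 < lam0) (hδ0 : 0 < δ)
    (hCG : 0 < C_G) (hθ₁ : 0 < θ₁) (hθθ : 2 * θ₁ < θ₀ - 2 * lam0)
    (n : ℕ) (hn : σ ≤ n)
    (Gr : (Fin d → ℤ) → ℝ → ℂ) (S : (Fin d → ℤ) → ℝ → ℂ)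
    (k : Fin d → ℤ) (hk : k ≠ 0)
    (hG : ∀ τ : ℝ, 0 ≤ τ →
      ‖Gr k τ‖ ≤ C_G * (japV (toE k))⁻¹ * Real.exp (-θ₀ * jap (‖toE k‖ * τ)))
    (hSm : Measurable (S k)) (t : ℝ) (ht : 0 ≤ t) :
    ENNReal.ofReal (wA d σ (lam lam0 δ t) k (t • toE k) *
        ‖∫ s in (0:ℝ)..t, Gr k (t - s) * S k s‖)
      ≤ ∫⁻ s in Set.Ioc (0:ℝ) t, ENNReal.ofReal
          ((C_G * Real.sqrt 2 ^ σ * (2 / (θ₀ - 2 * lam0 - 2 * θ₁)) ^ n * (Nat.factorial n : ℝ)) *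
            Real.exp (-2 * θ₁ * (t - s)) *
            (wA d σ (lam lam0 δ s) k (s • toE k) * ‖S k s‖)) := by
  have hW0 : 0 ≤ wA d σ (lam lam0 δ t) k (t • toE k) := wA_nonneg _ _ _ _ _
  rw [intervalIntegral.integral_of_le ht]
  calc ENNReal.ofReal (wA d σ (lam lam0 δ t) k (t • toE k) *
          ‖∫ s in Set.Ioc (0:ℝ) t, Gr k (t - s) * S k s‖)
      = ENNReal.ofReal (wA d σ (lam lam0 δ t) k (t • toE k)) *
          (‖∫ s in Set.Ioc (0:ℝ) t, Gr k (t - s) * S k s‖₊ : ℝ≥0∞) := by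
        rw [ENNReal.ofReal_mul hW0, ofReal_norm, enorm_eq_nnnorm]
    _ ≤ ENNReal.ofReal (wA d σ (lam lam0 δ t) k (t • toE k)) *
          ∫⁻ s in Set.Ioc (0:ℝ) t, (‖Gr k (t - s) * S k s‖₊ : ℝ≥0∞) :=
        mul_le_mul_right (enorm_integral_le_lintegral_enorm _) _
    _ = ∫⁻ s in Set.Ioc (0:ℝ) t, ENNReal.ofReal (wA d σ (lam lam0 δ t) k (t • toE k)) *
          (‖Gr k (t - s) * S k s‖₊ : ℝ≥0∞) :=
        (lintegral_const_mul' _ _ ENNReal.ofReal_ne_top).symm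
    _ ≤ _ := by
        apply setLIntegral_mono_ae
          (aem_term σ lam0 δ
            (C_G * Real.sqrt 2 ^ σ * (2 / (θ₀ - 2 * lam0 - 2 * θ₁)) ^ n *
              (Nat.factorial n : ℝ)) θ₁ k S hSm t)
        apply Filter.Eventually.of_forall
        intro x hx
        rw [← enorm_eq_nnnorm, ← ofReal_norm, ← ENNReal.ofReal_mul hW0]
        apply ENNReal.ofReal_le_ofReal
        rw [norm_mul]
        have h1 : ‖Gr k (t - x)‖ ≤
            C_G * (japV (toE k))⁻¹ * Real.exp (-θ₀ * jap (‖toE k‖ * (t - x))) :=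
          hG (t - x) (by linarith [hx.2])
        have h2 := key_est σ lam0 δ θ₀ C_G θ₁ hσ hl hδ0 hCG hθ₁ hθθ n hn k hk
          hx.1.le hx.2
        calc wA d σ (lam lam0 δ t) k (t • toE k) * (‖Gr k (t - x)‖ * ‖S k x‖)
            = (wA d σ (lam lam0 δ t) k (t • toE k) * ‖Gr k (t - x)‖) * ‖S k x‖ := by ring
          _ ≤ (C_G * Real.sqrt 2 ^ σ * (2 / (θ₀ - 2 * lam0 - 2 * θ₁)) ^ n *
                (Nat.factorial n : ℝ) * Real.exp (-2 * θ₁ * (t - x)) *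
                wA d σ (lam lam0 δ x) k (x • toE k)) * ‖S k x‖ := by
              apply mul_le_mul_of_nonneg_right _ (norm_nonneg _)
              exact le_trans (mul_le_mul_of_nonneg_left h1 hW0) h2
          _ = _ := by ring


lemma final_eq {d : ℕ} (σ lam0 δ Cv θ₁ : ℝ) (hCv : 0 < Cv)
    (S : (Fin d → ℤ) → ℝ → ℂ) (hSm : ∀ k, Measurable (S k)) (t : ℝ) :
    (∑' k : {k : Fin d → ℤ // k ≠ 0},
        ∫⁻ s in Set.Ioc (0:ℝ) t, ENNReal.ofReal
          (Cv * Real.exp (-2 * θ₁ * (t - s)) *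
            (wA d σ (lam lam0 δ s) k.1 (s • toE k.1) * ‖S k.1 s‖)))
      = ENNReal.ofReal Cv *
          ∫⁻ s in Set.Ioc (0:ℝ) t,
            ENNReal.ofReal (Real.exp (-2 * θ₁ * (t - s))) *
              Fnorm d σ S s (lam lam0 δ s) := by
  have hswap := lintegral_tsum (μ := volume.restrict (Set.Ioc (0:ℝ) t))
    (f := fun (k : {k : Fin d → ℤ // k ≠ 0}) (s : ℝ) => ENNReal.ofReal
      (Cv * Real.exp (-2 * θ₁ * (t - s)) *
        (wA d σ (lam lam0 δ s) k.1 (s • toE k.1) * ‖S k.1 s‖)))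
    (fun k => aem_term σ lam0 δ Cv θ₁ k.1 S (hSm k.1) t)
  rw [← hswap]
  rw [← lintegral_const_mul' _ _ ENNReal.ofReal_ne_top]
  apply lintegral_congr
  intro s
  have hterm : ∀ k : {k : Fin d → ℤ // k ≠ 0},
      ENNReal.ofReal (Cv * Real.exp (-2 * θ₁ * (t - s)) *
        (wA d σ (lam lam0 δ s) k.1 (s • toE k.1) * ‖S k.1 s‖))
      = ENNReal.ofReal Cv * (ENNReal.ofReal (Real.exp (-2 * θ₁ * (t - s))) *
          ENNReal.ofReal (wA d σ (lam lam0 δ s) k.1 (s • toE k.1) * ‖S k.1 s‖)) := by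
    intro k
    rw [mul_assoc, ENNReal.ofReal_mul hCv.le, ENNReal.ofReal_mul (Real.exp_pos _).le]
  rw [tsum_congr hterm, ENNReal.tsum_mul_left, ENNReal.tsum_mul_left]
  rfl


set_option maxHeartbeats 1000000 in
/-- convolution with the Green kernel `δ(t) + G^r_k(t)`, where
`|G^r_k(τ)| ≤ C_G ⟨k⟩^{-1} e^{-θ₀⟨|k|τ⟩}`, satisfies
`F[G⋆S](t,λ(t)) ≤ F[S](t,λ(t)) + C ∫₀^t e^{-2θ₁(t-s)} F[S](s,λ(s)) ds`. -/
theorem green_convolution_bound (d : ℕ) (hd : 1 ≤ d) (σ lam0 δ θ₀ C_G : ℝ)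
    (hσ : 0 ≤ σ) (hl : 0 < lam0) (hδ0 : 0 < δ) (hδ1 : δ < 1)
    (hθ₀ : θ₀ > 2 * lam0) (hCG : 0 < C_G)
    (θ₁ : ℝ) (hθ₁ : 0 < θ₁) (hθθ : 2 * θ₁ < θ₀ - 2 * lam0) :
    ∃ C > (0:ℝ),
      ∀ Gr : (Fin d → ℤ) → ℝ → ℂ, (∀ k, Measurable (Gr k)) →
      (∀ k : Fin d → ℤ, k ≠ 0 → ∀ τ : ℝ, 0 ≤ τ →
        ‖Gr k τ‖ ≤ C_G * (japV (toE k))⁻¹ * Real.exp (-θ₀ * jap (‖toE k‖ * τ))) →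
      ∀ S : (Fin d → ℤ) → ℝ → ℂ, (∀ k, Measurable (S k)) →
      ∀ t : ℝ, 0 ≤ t →
        Fnorm d σ (fun k τ => S k τ + ∫ s in (0:ℝ)..τ, Gr k (τ - s) * S k s)
            t (lam lam0 δ t) ≤
          Fnorm d σ S t (lam lam0 δ t) +
            ENNReal.ofReal C *
              ∫⁻ s in Set.Ioc (0:ℝ) t,
                ENNReal.ofReal (Real.exp (-2 * θ₁ * (t - s))) *
                  Fnorm d σ S s (lam lam0 δ s) := by
  obtain ⟨n, hn⟩ : ∃ n : ℕ, σ ≤ (n : ℝ) := ⟨⌈σ⌉₊, Nat.le_ceil σ⟩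
  have hε : 0 < θ₀ - 2 * lam0 - 2 * θ₁ := by linarith
  have hCv0 : 0 < C_G * Real.sqrt 2 ^ σ * (2 / (θ₀ - 2 * lam0 - 2 * θ₁)) ^ n *
      (Nat.factorial n : ℝ) := by
    apply mul_pos
    apply mul_pos
    apply mul_pos hCG (Real.rpow_pos_of_pos (Real.sqrt_pos.mpr two_pos) σ)
    · exact pow_pos (div_pos two_pos hε) n
    · exact_mod_cast Nat.factorial_pos n
  refine ⟨_, hCv0, ?_⟩
  intro Gr hGrm hG S hSm t ht
  calc Fnorm d σ (fun k τ => S k τ + ∫ s in (0:ℝ)..τ, Gr k (τ - s) * S k s)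
        t (lam lam0 δ t)
      ≤ ∑' k : {k : Fin d → ℤ // k ≠ 0},
          (ENNReal.ofReal (wA d σ (lam lam0 δ t) k.1 (t • toE k.1) * ‖S k.1 t‖) +
            ENNReal.ofReal (wA d σ (lam lam0 δ t) k.1 (t • toE k.1) *
              ‖∫ s in (0:ℝ)..t, Gr k.1 (t - s) * S k.1 s‖)) := by
        simp only [Fnorm]
        apply ENNReal.tsum_le_tsum
        intro k
        have hW0 := wA_nonneg d σ (lam lam0 δ t) k.1 (t • toE k.1)
        have h := norm_add_le (S k.1 t) (∫ s in (0:ℝ)..t, Gr k.1 (t - s) * S k.1 s)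
        calc ENNReal.ofReal (wA d σ (lam lam0 δ t) k.1 (t • toE k.1) *
              ‖S k.1 t + ∫ s in (0:ℝ)..t, Gr k.1 (t - s) * S k.1 s‖)
            ≤ ENNReal.ofReal
                (wA d σ (lam lam0 δ t) k.1 (t • toE k.1) * ‖S k.1 t‖ +
                  wA d σ (lam lam0 δ t) k.1 (t • toE k.1) *
                    ‖∫ s in (0:ℝ)..t, Gr k.1 (t - s) * S k.1 s‖) := by
              apply ENNReal.ofReal_le_ofReal
              nlinarith [mul_le_mul_of_nonneg_left h hW0]
          _ = _ := ENNReal.ofReal_add (mul_nonneg hW0 (norm_nonneg _))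
                (mul_nonneg hW0 (norm_nonneg _))
    _ = Fnorm d σ S t (lam lam0 δ t) +
          ∑' k : {k : Fin d → ℤ // k ≠ 0},
            ENNReal.ofReal (wA d σ (lam lam0 δ t) k.1 (t • toE k.1) *
              ‖∫ s in (0:ℝ)..t, Gr k.1 (t - s) * S k.1 s‖) := by
        rw [ENNReal.tsum_add]; rfl
    _ ≤ Fnorm d σ S t (lam lam0 δ t) +
          ∑' k : {k : Fin d → ℤ // k ≠ 0},
            ∫⁻ s in Set.Ioc (0:ℝ) t, ENNReal.ofReal
              ((C_G * Real.sqrt 2 ^ σ * (2 / (θ₀ - 2 * lam0 - 2 * θ₁)) ^ n *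
                  (Nat.factorial n : ℝ)) *
                Real.exp (-2 * θ₁ * (t - s)) *
                (wA d σ (lam lam0 δ s) k.1 (s • toE k.1) * ‖S k.1 s‖)) := by
        apply add_le_add_right
        apply ENNReal.tsum_le_tsum
        intro k
        exact perk_bound σ lam0 δ θ₀ C_G θ₁ hσ hl hδ0 hCG hθ₁ hθθ n hn Gr S k.1 k.2
          (fun τ hτ => hG k.1 k.2 τ hτ) (hSm k.1) t ht
    _ = _ := by
        rw [final_eq σ lam0 δ
          (C_G * Real.sqrt 2 ^ σ * (2 / (θ₀ - 2 * lam0 - 2 * θ₁)) ^ n *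
            (Nat.factorial n : ℝ)) θ₁ hCv0 S hSm t]
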